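/- For every integer m ≥ 2, Σ_{k=1}^{m−1} cot²(kπ/m) = (m − 1)(m − 2)/3. -/

import Mathlib

open Real

open Finset

private lemma aux_sum_mul_pow (x : ℂ) : ∀ N : ℕ,
    (∑ n ∈ range N, (n : ℂ) * x ^ n) * (x - 1) ^ 2
      = ((N : ℂ) - 1) * x ^ (N + 1) - (N : ℂ) * x ^ N + x
  | 0 => by norm_num
  | (N+1) => by
    rw [Finset.sum_range_succ, add_mul, aux_sum_mul_pow x N]
    push_cast
    ring

private lemma aux_csum1 : ∀ M : ℕ, (∑ n ∈ range M, (n : ℂ)) = M * (M - 1) / 2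
  | 0 => by norm_num
  | (M+1) => by
    rw [Finset.sum_range_succ, aux_csum1 M]
    push_cast; ring

private lemma aux_csum2 : ∀ M : ℕ, (∑ n ∈ range M, (n : ℂ) ^ 2) = M * (M - 1) * (2 * M - 1) / 6
  | 0 => by norm_num
  | (M+1) => by
    rw [Finset.sum_range_succ, aux_csum2 M]
    push_cast; ring

private lemma aux_cot_sq (θ : ℝ) (h : Complex.exp (2 * θ * Complex.I) ≠ 1) :
    (Complex.cot θ) ^ 2 =
      -((Complex.exp (2 * θ * Complex.I) + 1) ^ 2 / (Complex.exp (2 * θ * Complex.I) - 1) ^ 2) := by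
  set E : ℂ := Complex.exp ((θ : ℂ) * Complex.I) with hEdef
  have hE : E ≠ 0 := Complex.exp_ne_zero _
  have h2 : Complex.exp (2 * θ * Complex.I) = E ^ 2 := by
    rw [hEdef, ← Complex.exp_nat_mul]
    norm_num
    ring_nf
  have h1 : E ^ 2 ≠ 1 := by rw [← h2]; exact h
  have hsub : E ^ 2 - 1 ≠ 0 := sub_ne_zero.mpr h1
  have hcos : Complex.cos θ = (E + E⁻¹) / 2 := by
    rw [Complex.cos, neg_mul, Complex.exp_neg, hEdef]
  have hsin : Complex.sin θ = (E⁻¹ - E) * Complex.I / 2 := by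
    rw [Complex.sin, neg_mul, Complex.exp_neg, hEdef]
  have hsinne : Complex.sin (θ : ℂ) ≠ 0 := by
    rw [hsin]
    intro hc
    apply h1
    have h3 : (1 - E * E) * Complex.I = 0 := by
      field_simp at hc
      linear_combination hc
    have h4 : 1 - E * E = 0 := by
      rcases mul_eq_zero.mp h3 with h | h
      · exact h
      · exact absurd h Complex.I_ne_zero
    linear_combination -h4
  have key : Complex.cot θ = Complex.I * (E ^ 2 + 1) / (E ^ 2 - 1) := by
    rw [Complex.cot_eq_cos_div_sin, div_eq_iff hsinne, hsin, hcos]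
    field_simp
    linear_combination (E ^ 4 - 1) * Complex.I_sq
  rw [key, h2]
  field_simp
  linear_combination (1 + 2 * E ^ 2 + E ^ 4) * Complex.I_sq

/-- For every integer `m ≥ 2`, `Σ_{k=1}^{m−1} cot²(kπ/m) = (m − 1)(m − 2)/3`. -/
theorem sum_cot_sq (m : ℕ) (hm : 2 ≤ m) :
    (∑ k ∈ Finset.Icc 1 (m - 1), Real.cot ((k : ℝ) * Real.pi / m) ^ 2) =
      ((m : ℝ) - 1) * ((m : ℝ) - 2) / 3 := by
  have hm0 : m ≠ 0 := by omega
  have hmne : (m : ℂ) ≠ 0 := Nat.cast_ne_zero.mpr hm0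
  set ζ : ℂ := Complex.exp (2 * Real.pi * Complex.I / m) with hζdef
  have hζ : IsPrimitiveRoot ζ m := Complex.isPrimitiveRoot_exp m hm0
  -- orthogonality
  have horth : ∀ n : ℕ, (∑ k ∈ Finset.range m, (ζ ^ n) ^ k) =
      if m ∣ n then (m : ℂ) else 0 := by
    intro n
    by_cases hd : m ∣ n
    · rw [if_pos hd, (hζ.pow_eq_one_iff_dvd n).mpr hd]
      simp
    · rw [if_neg hd]
      have hne1 : ζ ^ n ≠ 1 := fun hc => hd ((hζ.pow_eq_one_iff_dvd n).mp hc)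
      rw [geom_sum_eq hne1]
      have : (ζ ^ n) ^ m = 1 := by
        rw [← pow_mul, mul_comm, pow_mul, hζ.pow_eq_one, one_pow]
      rw [this]
      simp
  -- T k
  set T : ℕ → ℂ := fun k => ∑ n ∈ Finset.range m, (n : ℂ) * (ζ ^ k) ^ n with hTdef
  -- T k * (ζ^k - 1) = m for nontrivial k
  have hTk : ∀ k ∈ Finset.Icc 1 (m - 1), T k * (ζ ^ k - 1) = m := by
    intro k hk
    rw [Finset.mem_Icc] at hk
    have hne1 : ζ ^ k ≠ 1 := hζ.pow_ne_one_of_pos_of_lt (by omega) (by omega)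
    have hsub : ζ ^ k - 1 ≠ 0 := sub_ne_zero.mpr hne1
    have h1 := aux_sum_mul_pow (ζ ^ k) m
    have hpow : (ζ ^ k) ^ m = 1 := by
      rw [← pow_mul, mul_comm, pow_mul, hζ.pow_eq_one, one_pow]
    rw [pow_succ (ζ ^ k) m, hpow, one_mul] at h1
    apply mul_right_cancel₀ hsub
    rw [hTdef]
    simp only []
    calc (∑ n ∈ Finset.range m, (n : ℂ) * (ζ ^ k) ^ n) * (ζ ^ k - 1) * (ζ ^ k - 1)
        = (∑ n ∈ Finset.range m, (n : ℂ) * (ζ ^ k) ^ n) * (ζ ^ k - 1) ^ 2 := by ring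
      _ = ((m : ℂ) - 1) * (ζ ^ k) - (m : ℂ) * 1 + ζ ^ k := h1
      _ = (m : ℂ) * (ζ ^ k - 1) := by ring
  -- split range m = {0} ∪ Icc 1 (m-1)
  have hsplit : ∀ f : ℕ → ℂ, (∑ k ∈ Finset.range m, f k)
      = f 0 + ∑ k ∈ Finset.Icc 1 (m - 1), f k := by
    intro f
    have : Finset.range m = insert 0 (Finset.Icc 1 (m - 1)) := by
      ext x
      simp only [Finset.mem_range, Finset.mem_insert, Finset.mem_Icc]
      omega
    rw [this, Finset.sum_insert (by simp)]
  -- T 0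
  have hT0 : T 0 = (m : ℂ) * ((m : ℂ) - 1) / 2 := by
    rw [hTdef]
    simp only [pow_zero, one_pow, mul_one]
    exact aux_csum1 m
  -- sum of T over range m is 0
  have hTrange : (∑ k ∈ Finset.range m, T k) = 0 := by
    rw [hTdef]
    simp only []
    rw [Finset.sum_comm]
    apply Finset.sum_eq_zero
    intro n hn
    rw [Finset.mem_range] at hn
    have : (∑ k ∈ Finset.range m, (n : ℂ) * (ζ ^ k) ^ n)
        = (n : ℂ) * ∑ k ∈ Finset.range m, (ζ ^ n) ^ k := by
      rw [Finset.mul_sum]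
      apply Finset.sum_congr rfl
      intro k _
      rw [← pow_mul, ← pow_mul, Nat.mul_comm k n]
    rw [this, horth n]
    rcases Nat.eq_zero_or_pos n with h0 | h0
    · subst h0; simp
    · rw [if_neg (fun hd => absurd (Nat.le_of_dvd h0 hd) (by omega))]
      ring
  -- divisibility helper
  have hdvd : ∀ n p : ℕ, n < m → p < m → (m ∣ (n + p) ↔ p = (m - n) % m) := by
    intro n p hn hp
    rcases Nat.eq_zero_or_pos n with h0 | h0
    · subst h0
      simp only [Nat.zero_add, Nat.sub_zero, Nat.mod_self]
      constructor
      · intro hd; exact Nat.eq_zero_of_dvd_of_lt hd hp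
      · rintro rfl; exact dvd_zero m
    · have hlt : m - n < m := by omega
      rw [Nat.mod_eq_of_lt hlt]
      constructor
      · rintro ⟨c, hc⟩
        have hc2 : c < 2 := by
          by_contra hcge
          push_neg at hcge
          have : m * 2 ≤ m * c := Nat.mul_le_mul_left m hcge
          omega
        interval_cases c <;> omega
      · rintro rfl; exact ⟨1, by omega⟩
  -- inner p-sum
  have hinner : ∀ n ∈ Finset.range m,
      (∑ p ∈ Finset.range m, (p : ℂ) * (if m ∣ (n + p) then (m : ℂ) else 0))
        = (((m - n) % m : ℕ) : ℂ) * m := by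
    intro n hn
    rw [Finset.mem_range] at hn
    have hcongr : ∀ p ∈ Finset.range m, (p : ℂ) * (if m ∣ (n + p) then (m : ℂ) else 0)
        = if p = (m - n) % m then (((m - n) % m : ℕ) : ℂ) * m else 0 := by
      intro p hp
      rw [Finset.mem_range] at hp
      simp only [hdvd n p hn hp]
      by_cases h : p = (m - n) % m
      · subst h; simp
      · simp [h]
    rw [Finset.sum_congr rfl hcongr, Finset.sum_ite_eq' (Finset.range m),
      if_pos (Finset.mem_range.mpr (Nat.mod_lt _ (by omega)))]
  -- sum of T^2 over range m
  have hT2range : (∑ k ∈ Finset.range m, T k ^ 2)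
      = (m : ℂ) * ∑ n ∈ Finset.range m, (n : ℂ) * ((m : ℂ) - n) := by
    have step1 : ∀ k, T k ^ 2 = ∑ n ∈ Finset.range m, ∑ p ∈ Finset.range m,
        (n : ℂ) * (p : ℂ) * (ζ ^ (n + p)) ^ k := by
      intro k
      rw [hTdef]; simp only []
      rw [sq, Finset.sum_mul_sum]
      apply Finset.sum_congr rfl; intro n _
      apply Finset.sum_congr rfl; intro p _
      have hpw : (ζ ^ k) ^ n * (ζ ^ k) ^ p = (ζ ^ (n + p)) ^ k := by
        rw [← pow_add, ← pow_mul, ← pow_mul, Nat.mul_comm]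
      linear_combination ((n : ℂ) * p) * hpw
    calc (∑ k ∈ Finset.range m, T k ^ 2)
        = ∑ k ∈ Finset.range m, ∑ n ∈ Finset.range m, ∑ p ∈ Finset.range m,
            (n : ℂ) * (p : ℂ) * (ζ ^ (n + p)) ^ k :=
          Finset.sum_congr rfl fun k _ => step1 k
      _ = ∑ n ∈ Finset.range m, ∑ p ∈ Finset.range m, ∑ k ∈ Finset.range m,
            (n : ℂ) * (p : ℂ) * (ζ ^ (n + p)) ^ k := by
          rw [Finset.sum_comm]
          exact Finset.sum_congr rfl fun n _ => Finset.sum_comm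
      _ = ∑ n ∈ Finset.range m, ∑ p ∈ Finset.range m,
            (n : ℂ) * ((p : ℂ) * (if m ∣ (n + p) then (m : ℂ) else 0)) := by
          apply Finset.sum_congr rfl; intro n _
          apply Finset.sum_congr rfl; intro p _
          have hpull : (∑ k ∈ Finset.range m, (n : ℂ) * (p : ℂ) * (ζ ^ (n + p)) ^ k)
              = (n : ℂ) * ((p : ℂ) * (∑ k ∈ Finset.range m, (ζ ^ (n + p)) ^ k)) := by
            rw [Finset.mul_sum, Finset.mul_sum]
            exact Finset.sum_congr rfl fun k _ => by ring
          rw [hpull, horth (n + p)]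
      _ = ∑ n ∈ Finset.range m, (n : ℂ) * ((((m - n) % m : ℕ) : ℂ) * m) := by
          apply Finset.sum_congr rfl; intro n hn
          rw [← Finset.mul_sum, hinner n hn]
      _ = ∑ n ∈ Finset.range m, (m : ℂ) * ((n : ℂ) * ((m : ℂ) - n)) := by
          apply Finset.sum_congr rfl; intro n hn
          rw [Finset.mem_range] at hn
          rcases Nat.eq_zero_or_pos n with h0 | h0
          · subst h0; simp
          · rw [Nat.mod_eq_of_lt (by omega : m - n < m), Nat.cast_sub (by omega : n ≤ m)]
            ring
      _ = (m : ℂ) * ∑ n ∈ Finset.range m, (n : ℂ) * ((m : ℂ) - n) := by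
          rw [Finset.mul_sum]
  have hsq : (∑ n ∈ Finset.range m, (n : ℂ) * ((m : ℂ) - n))
      = (m : ℂ) * ((m : ℂ) * ((m : ℂ) - 1) / 2) - (m : ℂ) * ((m : ℂ) - 1) * (2 * (m : ℂ) - 1) / 6 := by
    have h1 : ∀ n ∈ Finset.range m, (n : ℂ) * ((m : ℂ) - n) = (m : ℂ) * (n : ℂ) - (n : ℂ) ^ 2 :=
      fun n _ => by ring
    rw [Finset.sum_congr rfl h1, Finset.sum_sub_distrib, ← Finset.mul_sum, aux_csum1, aux_csum2]
  -- Icc sums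
  have hIccT : (∑ k ∈ Finset.Icc 1 (m - 1), T k) = -((m : ℂ) * ((m : ℂ) - 1) / 2) := by
    have h := hsplit T
    rw [hTrange, hT0] at h
    linear_combination -h
  have hIccT2 : (∑ k ∈ Finset.Icc 1 (m - 1), T k ^ 2)
      = (m : ℂ) * ((m : ℂ) * ((m : ℂ) * ((m : ℂ) - 1) / 2)
          - (m : ℂ) * ((m : ℂ) - 1) * (2 * (m : ℂ) - 1) / 6)
        - ((m : ℂ) * ((m : ℂ) - 1) / 2) ^ 2 := by
    have h := hsplit fun k => T k ^ 2
    rw [hT2range, hsq, hT0] at h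
    linear_combination -h
  -- pointwise cotangent identity
  have hpt : ∀ k ∈ Finset.Icc 1 (m - 1),
      (Complex.cot ((k : ℂ) * (Real.pi : ℂ) / (m : ℂ))) ^ 2 = -(1 + 2 / (m : ℂ) * T k) ^ 2 := by
    intro k hk
    rw [Finset.mem_Icc] at hk
    have hne1 : ζ ^ k ≠ 1 := hζ.pow_ne_one_of_pos_of_lt (by omega) (by omega)
    have hsub : ζ ^ k - 1 ≠ 0 := sub_ne_zero.mpr hne1
    have hexp : Complex.exp (2 * (((k : ℝ) * Real.pi / m : ℝ) : ℂ) * Complex.I) = ζ ^ k := by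
      rw [hζdef, ← Complex.exp_nat_mul]
      congr 1
      push_cast
      field_simp
    have hcs := aux_cot_sq ((k : ℝ) * Real.pi / m) (by rw [hexp]; exact hne1)
    have harg : ((k : ℂ) * (Real.pi : ℂ) / (m : ℂ)) = (((k : ℝ) * Real.pi / m : ℝ) : ℂ) := by
      push_cast
      ring
    rw [harg, hcs, hexp]
    have hTk' := hTk k (Finset.mem_Icc.mpr hk)
    have hfrac : 1 + 2 / (m : ℂ) * T k = (ζ ^ k + 1) / (ζ ^ k - 1) := by
      rw [eq_div_iff hsub]
      field_simp
      linear_combination 2 * hTk'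
    rw [hfrac, div_pow]
  -- assemble
  have expand : ∀ k ∈ Finset.Icc 1 (m - 1), -(1 + 2 / (m : ℂ) * T k) ^ 2
      = -1 - (4 / (m : ℂ)) * T k - (4 / ((m : ℂ) * (m : ℂ))) * T k ^ 2 := by
    intro k _
    field_simp
    ring
  have hcard : (Finset.Icc 1 (m - 1)).card = m - 1 := by
    rw [Nat.card_Icc]
    omega
  have main : ((∑ k ∈ Finset.Icc 1 (m - 1), Real.cot ((k : ℝ) * Real.pi / m) ^ 2 : ℝ) : ℂ)
      = ((m : ℂ) - 1) * ((m : ℂ) - 2) / 3 := by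
    push_cast
    rw [Finset.sum_congr rfl hpt, Finset.sum_congr rfl expand]
    rw [Finset.sum_sub_distrib, Finset.sum_sub_distrib, ← Finset.mul_sum, ← Finset.mul_sum,
      Finset.sum_const, hcard, hIccT, hIccT2]
    have hm1 : ((m - 1 : ℕ) : ℂ) = (m : ℂ) - 1 := by
      push_cast [Nat.cast_sub (by omega : 1 ≤ m)]
      ring
    rw [nsmul_eq_mul, hm1]
    field_simp
    ring
  exact_mod_cast main
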